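/- Let R be an invertible n×n real matrix. The Amari distance expression (1/(2n)) Σ_i (Σ_j |r_{ij}|/max_j |r_{ij}| − 1) + (1/(2n)) Σ_j (Σ_i |r_{ij}|/max_i |r_{ij}| − 1) equals zero if and only if R has exactly one nonzero entry in each row and each column, i.e., R = PΛ for a permutation matrix P and invertible diagonal Λ. -/
import Mathlib


/-- The Amari distance expression evaluated at a matrix `R`. -/
noncomputable def amariExpr {n : ℕ} (R : Matrix (Fin n) (Fin n) ℝ) : ℝ :=
  (1 / (2 * (n : ℝ))) * ∑ i, ((∑ j, |R i j|) / (⨆ j, |R i j|) - 1) +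
    (1 / (2 * (n : ℝ))) * ∑ j, ((∑ i, |R i j|) / (⨆ i, |R i j|) - 1)

lemma amari_term_key {n : ℕ} [Nonempty (Fin n)] (v : Fin n → ℝ) (hv : ∃ j, v j ≠ 0) :
    0 ≤ (∑ j, |v j|) / (⨆ j, |v j|) - 1 ∧
      ((∑ j, |v j|) / (⨆ j, |v j|) - 1 = 0 ↔ ∃! j, v j ≠ 0) := by
  obtain ⟨j₀, hj₀⟩ := hv
  have hbdd : BddAbove (Set.range fun j => |v j|) := Set.Finite.bddAbove (Set.finite_range _)
  obtain ⟨k, hk⟩ := Finite.exists_max (fun j => |v j|)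
  have hM : (⨆ j, |v j|) = |v k| := le_antisymm (ciSup_le hk) (le_ciSup hbdd k)
  have hMpos : 0 < |v k| := lt_of_lt_of_le (abs_pos.mpr hj₀) (hk j₀)
  have hS : |v k| ≤ ∑ j, |v j| :=
    Finset.single_le_sum (f := fun j => |v j|) (fun j _ => abs_nonneg _) (Finset.mem_univ k)
  constructor
  · rw [hM]
    have : 1 ≤ (∑ j, |v j|) / |v k| := (one_le_div hMpos).mpr hS
    linarith
  · rw [hM, sub_eq_zero, div_eq_one_iff_eq hMpos.ne']
    constructor
    · intro hsum
      have herase : ∑ j ∈ Finset.univ.erase k, |v j| = 0 := by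
        have := Finset.sum_erase_add Finset.univ (fun j => |v j|) (Finset.mem_univ k)
        linarith
      have hzero : ∀ j ∈ Finset.univ.erase k, |v j| = 0 :=
        (Finset.sum_eq_zero_iff_of_nonneg (fun j _ => abs_nonneg _)).mp herase
      refine ⟨k, abs_pos.mp hMpos, fun j hj => ?_⟩
      by_contra hne
      exact hj (abs_eq_zero.mp (hzero j (Finset.mem_erase.mpr ⟨hne, Finset.mem_univ j⟩)))
    · rintro ⟨j₁, h1, huniq⟩
      have hk1 : k = j₁ := huniq k (abs_pos.mp hMpos)
      subst hk1
      refine Finset.sum_eq_single k (fun j _ hne => ?_) (by simp)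
      have : v j = 0 := by
        by_contra h
        exact hne (huniq j h)
      simp [this]

/-- The Amari expression of an invertible matrix `R` vanishes iff `R` has exactly one
nonzero entry in each row and column, i.e. `R = PΛ` with `P` a permutation matrix and
`Λ` invertible diagonal. -/
theorem amariExpr_eq_zero_iff (n : ℕ) (hn : 0 < n)
    (R : Matrix (Fin n) (Fin n) ℝ) (hR : IsUnit R.det) :
    amariExpr R = 0 ↔
      ∃ (σ : Equiv.Perm (Fin n)) (d : Fin n → ℝ), (∀ i, d i ≠ 0) ∧
        R = Matrix.of fun i j => if j = σ i then d i else 0 := by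
  haveI : Nonempty (Fin n) := Fin.pos_iff_nonempty.mp hn
  have hdet : R.det ≠ 0 := hR.ne_zero
  have hrow0 : ∀ i, ∃ j, R i j ≠ 0 := by
    intro i
    by_contra h
    push_neg at h
    exact hdet (Matrix.det_eq_zero_of_row_eq_zero i h)
  have hcol0 : ∀ j, ∃ i, R i j ≠ 0 := by
    intro j
    by_contra h
    push_neg at h
    exact hdet (Matrix.det_eq_zero_of_column_eq_zero j h)
  have hc : 0 < 1 / (2 * (n : ℝ)) := by positivity
  have hrowkey := fun i => amari_term_key (fun j => R i j) (hrow0 i)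
  have hcolkey := fun j => amari_term_key (fun i => R i j) (hcol0 j)
  have hzero : amariExpr R = 0 ↔
      (∀ i, (∑ j, |R i j|) / (⨆ j, |R i j|) - 1 = 0) ∧
      (∀ j, (∑ i, |R i j|) / (⨆ i, |R i j|) - 1 = 0) := by
    unfold amariExpr
    constructor
    · intro h
      have h1 : 0 ≤ ∑ i, ((∑ j, |R i j|) / (⨆ j, |R i j|) - 1) :=
        Finset.sum_nonneg fun i _ => (hrowkey i).1
      have h2 : 0 ≤ ∑ j, ((∑ i, |R i j|) / (⨆ i, |R i j|) - 1) :=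
        Finset.sum_nonneg fun j _ => (hcolkey j).1
      have hs1 : ∑ i, ((∑ j, |R i j|) / (⨆ j, |R i j|) - 1) = 0 := by nlinarith
      have hs2 : ∑ j, ((∑ i, |R i j|) / (⨆ i, |R i j|) - 1) = 0 := by nlinarith
      exact ⟨fun i => (Finset.sum_eq_zero_iff_of_nonneg (fun i _ => (hrowkey i).1)).mp hs1 i
          (Finset.mem_univ i),
        fun j => (Finset.sum_eq_zero_iff_of_nonneg (fun j _ => (hcolkey j).1)).mp hs2 j
          (Finset.mem_univ j)⟩
    · rintro ⟨h1, h2⟩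
      rw [Finset.sum_eq_zero fun i _ => h1 i, Finset.sum_eq_zero fun j _ => h2 j]
      ring
  rw [hzero]
  constructor
  · rintro ⟨h1, h2⟩
    have hrow : ∀ i, ∃! j, R i j ≠ 0 := fun i => (hrowkey i).2.mp (h1 i)
    have hcol : ∀ j, ∃! i, R i j ≠ 0 := fun j => (hcolkey j).2.mp (h2 j)
    choose σ hσ1 hσ2 using hrow
    have hinj : Function.Injective σ := by
      intro i₁ i₂ h
      obtain ⟨i₀, -, hu⟩ := hcol (σ i₁)
      have e1 : i₁ = i₀ := hu i₁ (hσ1 i₁)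
      have e2 : i₂ = i₀ := hu i₂ (by rw [h]; exact hσ1 i₂)
      rw [e1, e2]
    refine ⟨Equiv.ofBijective σ ((Fintype.bijective_iff_injective_and_card σ).mpr
      ⟨hinj, rfl⟩), fun i => R i (σ i), fun i => hσ1 i, ?_⟩
    ext i j
    simp only [Matrix.of_apply, Equiv.ofBijective_apply]
    by_cases hj : j = σ i
    · subst hj; simp
    · rw [if_neg hj]
      by_contra h
      exact hj (hσ2 i j h)
  · rintro ⟨σ, d, hd, rfl⟩
    constructor
    · intro i
      refine (hrowkey i).2.mpr ⟨σ i, ?_, fun j hj => ?_⟩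
      · simp [hd i]
      · by_contra hne
        simp only [Matrix.of_apply, if_neg hne] at hj
        exact hj rfl
    · intro j
      refine (hcolkey j).2.mpr ⟨σ.symm j, ?_, fun i hi => ?_⟩
      · simp [hd]
      · simp only [Matrix.of_apply, ne_eq, ite_eq_right_iff, not_forall] at hi
        obtain ⟨hj, -⟩ := hi
        rw [hj, Equiv.symm_apply_apply]
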